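/- For any traceless symmetric 3×3 real matrix h with eigenvalues a, b, c (so a+b+c=0), one has (tr h²)³ − 6(tr h³)² = (a−b)²(b−c)²(c−a)²·K for the explicit nonnegative combination, and in particular (tr h²)³ ≥ 6(tr h³)². -/
import Mathlib


open Polynomial

set_option maxHeartbeats 800000

/-- For a traceless symmetric 3×3 matrix `h` with eigenvalues
`a, b, c` (so `a + b + c = 0`), one has
`(tr h²)³ − 6(tr h³)² = 2·(a−b)²(b−c)²(c−a)²`, and in particular
`(tr h²)³ ≥ 6(tr h³)²`. -/
theorem trace_discriminant_identity
    (h : Matrix (Fin 3) (Fin 3) ℝ) (hsym : h.IsSymm) (htr : h.trace = 0)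
    (a b c : ℝ)
    (hcp : h.charpoly = (X - C a) * (X - C b) * (X - C c))
    (hsum : a + b + c = 0) :
    ((h ^ 2).trace) ^ 3 - 6 * ((h ^ 3).trace) ^ 2
        = 2 * ((a - b) * (b - c) * (c - a)) ^ 2 ∧
      6 * ((h ^ 3).trace) ^ 2 ≤ ((h ^ 2).trace) ^ 3 := by
  have hcpE : (X - C (h 0 0)) * ((X - C (h 1 1)) * (X - C (h 2 2)) - C (h 1 2) * C (h 2 1))
      - (-C (h 0 1)) * ((-C (h 1 0)) * (X - C (h 2 2)) - C (h 1 2) * C (h 2 0))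
      + (-C (h 0 2)) * ((-C (h 1 0)) * (-C (h 2 1)) - (X - C (h 1 1)) * (-C (h 2 0)))
      = (X - C a) * (X - C b) * (X - C c) := by
    rw [← hcp, Matrix.charpoly, Matrix.det_fin_three]
    simp [Matrix.charmatrix_apply_eq, Matrix.charmatrix_apply_ne]
    ring
  have e2 := congrArg (fun p => p.coeff 1) hcpE
  have e3 := congrArg (fun p => p.coeff 0) hcpE
  simp [coeff_one, mul_sub, sub_mul, coeff_sub, coeff_add, coeff_mul_X, coeff_C_mul, coeff_X] at e2 e3
  have htrE : h 0 0 + h 1 1 + h 2 2 = 0 := by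
    simpa [Matrix.trace, Fin.sum_univ_three] using htr
  have s01 : h 1 0 = h 0 1 := congrFun (congrFun hsym 0) 1
  have s02 : h 2 0 = h 0 2 := congrFun (congrFun hsym 0) 2
  have s12 : h 2 1 = h 1 2 := congrFun (congrFun hsym 1) 2
  have tr2 : (h ^ 2).trace = a ^ 2 + b ^ 2 + c ^ 2 := by
    simp only [pow_two, Matrix.trace, Fin.sum_univ_three, Matrix.diag, Matrix.mul_apply]
    rw [s01, s02, s12] at e2 e3 ⊢
    linear_combination (h 0 0 + h 1 1 + h 2 2) * htrE - (a + b + c) * hsum - 2 * e2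
  have tr3 : (h ^ 3).trace = 3 * (a * b * c) := by
    simp only [pow_succ, pow_zero, one_mul, Matrix.trace, Fin.sum_univ_three, Matrix.diag,
      Matrix.mul_apply]
    rw [s01, s02, s12] at e2 e3 ⊢
    linear_combination ((h 0 0 + h 1 1 + h 2 2) ^ 2
        - 3 * (h 0 0 * h 1 1 + h 0 0 * h 2 2 + h 1 1 * h 2 2 - h 0 1 ^ 2 - h 0 2 ^ 2 - h 1 2 ^ 2))
        * htrE - 3 * e3
  rw [tr2, tr3]
  have hc : c = -a - b := by linarith
  subst hc
  constructor
  · ring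
  · nlinarith [sq_nonneg ((a - b) * (b - (-a - b)) * ((-a - b) - a))]
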